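/- If p is a prime with p ≡ 5 (mod 8) or p ≡ 7 (mod 8), then p divides P_{(p-1)/2}, where P_n are the Catalan-Larcombe-French numbers. -/

import Mathlib

open Finset

lemma L1 (n j : ℕ) : (n+1) * n.choose j = ((n+1)-j) * (n+1).choose j := by
  cases j with
  | zero => simp
  | succ i => rw [Nat.add_one_mul_choose_eq, Nat.choose_succ_right_eq]; ring

lemma L2 (k : ℕ) : (k+1) * (2*(k+1)).choose (k+1) = 2*(2*k+1) * ((2*k).choose k) := by
  have e : 2*(k+1) = (2*k+1)+1 := by ring
  have h1 : (2*(k+1)).choose (k+1) = (2*k+1).choose k + (2*k+1).choose (k+1) := by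
    rw [e]; exact Nat.choose_succ_succ _ _
  have h2 : (2*k+1).choose ((2*k+1) - (k+1)) = (2*k+1).choose (k+1) :=
    Nat.choose_symm (by omega)
  have h2' : (2*k+1) - (k+1) = k := by omega
  have h3 : (2*k+1) * (2*k).choose k = (2*k+1).choose (k+1) * (k+1) :=
    Nat.add_one_mul_choose_eq (2*k) k
  rw [h2'] at h2
  nlinarith [h1, h2, h3]

noncomputable def Tq (n k : ℕ) : ℚ :=
  (n.choose (2*k)) * (((2*k).choose k) : ℚ)^2 * 8^n / 16^k

lemma Tpt (n k : ℕ) (hn : 2 ≤ n) :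
    (n:ℚ)^3 * Tq n k + 128*(n:ℚ)*((n:ℚ)-1)^2 * Tq (n-2) k + 8*((k:ℚ)+1)^3 * Tq n (k+1)
      = 8*(n:ℚ)*(3*(n:ℚ)^2-3*(n:ℚ)+1) * Tq (n-1) k + 8*(k:ℚ)^3 * Tq n k := by
  have hVk : (16:ℚ)^k ≠ 0 := by positivity
  rcases (by omega : 2*k+2 ≤ n ∨ 2*k+1 = n ∨ 2*k = n ∨ n < 2*k) with h | h | h | h
  · -- generic case
    have hx : (n:ℚ) ≠ 0 := by
      exact_mod_cast Nat.cast_ne_zero.mpr (by omega : n ≠ 0)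
    have h2n : (2:ℚ) ≤ (n:ℚ) := by exact_mod_cast hn
    have hx1 : (n:ℚ) - 1 ≠ 0 := by intro hc; nlinarith
    have hy1 : (k:ℚ) + 1 ≠ 0 := by positivity
    have hy2 : 2*(k:ℚ) + 1 ≠ 0 := by positivity
    have hy3 : 2*(k:ℚ) + 2 ≠ 0 := by positivity
    -- cast subtraction facts
    have c1 : ((n - 2*k : ℕ) : ℚ) = (n:ℚ) - 2*k := by
      push_cast [Nat.cast_sub (by omega : 2*k ≤ n)]; ring
    have c2 : ((n - 1 - 2*k : ℕ) : ℚ) = (n:ℚ) - 2*k - 1 := by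
      have : ((n - 1 - 2*k : ℕ) : ℚ) = ((n - (2*k+1) : ℕ) : ℚ) := by norm_num; omega
      rw [this, Nat.cast_sub (by omega : 2*k+1 ≤ n)]; push_cast; ring
    -- ratio identities
    have e1 : ((n-1).choose (2*k) : ℚ) = ((n:ℚ) - 2*k) * (n.choose (2*k) : ℚ) / n := by
      rw [eq_div_iff hx]
      have := L1 (n-1) (2*k)
      have hn1 : n - 1 + 1 = n := by omega
      rw [hn1] at this
      have := congrArg (fun z : ℕ => (z : ℚ)) this
      push_cast at this
      rw [c1] at this
      linarith [this]
    have e2 : ((n-2).choose (2*k) : ℚ)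
        = ((n:ℚ) - 2*k - 1) * ((n-1).choose (2*k) : ℚ) / ((n:ℚ) - 1) := by
      rw [eq_div_iff hx1]
      have := L1 (n-2) (2*k)
      have hn2 : n - 2 + 1 = n - 1 := by omega
      rw [hn2] at this
      have := congrArg (fun z : ℕ => (z : ℚ)) this
      push_cast at this
      have cn1 : ((n - 1 : ℕ) : ℚ) = (n:ℚ) - 1 := by
        rw [Nat.cast_sub (by omega : 1 ≤ n)]; push_cast; ring
      rw [c2, cn1] at this
      linarith [this]
    have e3' : (n.choose (2*k+1) : ℚ) = (n.choose (2*k) : ℚ) * ((n:ℚ) - 2*k) / (2*k+1) := by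
      rw [eq_div_iff hy2]
      have := congrArg (fun z : ℕ => (z : ℚ)) (Nat.choose_succ_right_eq n (2*k))
      push_cast at this
      rw [c1] at this
      linarith [this]
    have e3 : (n.choose (2*(k+1)) : ℚ)
        = (n.choose (2*k+1) : ℚ) * ((n:ℚ) - 2*k - 1) / (2*k+2) := by
      rw [eq_div_iff hy3]
      have h22 : 2*(k+1) = (2*k+1)+1 := by ring
      have := congrArg (fun z : ℕ => (z : ℚ)) (Nat.choose_succ_right_eq n (2*k+1))
      push_cast at this
      have cc : ((n - (2*k+1) : ℕ) : ℚ) = (n:ℚ) - 2*k - 1 := by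
        rw [Nat.cast_sub (by omega : 2*k+1 ≤ n)]; push_cast; ring
      rw [cc] at this
      rw [h22]
      push_cast
      linarith [this]
    have eB : ((2*(k+1)).choose (k+1) : ℚ) = 2*(2*(k:ℚ)+1) * ((2*k).choose k : ℚ) / ((k:ℚ)+1) := by
      rw [eq_div_iff hy1]
      have := congrArg (fun z : ℕ => (z : ℚ)) (L2 k)
      push_cast at this
      linarith [this]
    have p1 : (8:ℚ)^(n-1) = 8^(n-2) * 8 := by
      rw [← pow_succ]; congr 1; omega
    have p2 : (8:ℚ)^n = 8^(n-2) * 64 := by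
      have : (8:ℚ)^(n-2) * 64 = 8^(n-2) * 8^2 := by norm_num
      rw [this, ← pow_add]; congr 1; omega
    simp only [Tq, e1, e2, e3, e3', eB, p1, p2, pow_succ]
    field_simp
    ring
  · -- 2k+1 = n
    subst h
    have z2 : (2*k+1-2).choose (2*k) = 0 := Nat.choose_eq_zero_of_lt (by omega)
    have z4 : (2*k+1).choose (2*(k+1)) = 0 := Nat.choose_eq_zero_of_lt (by omega)
    have o1 : (2*k+1-1).choose (2*k) = 1 := by
      have : 2*k+1-1 = 2*k := by omega
      rw [this, Nat.choose_self]
    have o2 : (2*k+1).choose (2*k) = 2*k+1 := by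
      have h1 : (2*k+1) - 1 = 2*k := by omega
      have := Nat.choose_symm (by omega : 1 ≤ 2*k+1)
      rw [h1] at this
      rw [this, Nat.choose_one_right]
    have p1 : (8:ℚ)^(2*k+1) = 8^(2*k+1-1) * 8 := by
      have : 2*k+1-1 = 2*k := by omega
      rw [this, ← pow_succ]
    simp only [Tq, z2, z4, o1, o2, p1]
    push_cast
    field_simp
    ring
  · -- 2k = n
    subst h
    have z2 : (2*k-2).choose (2*k) = 0 := Nat.choose_eq_zero_of_lt (by omega)
    have z3 : (2*k-1).choose (2*k) = 0 := Nat.choose_eq_zero_of_lt (by omega)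
    have z4 : (2*k).choose (2*(k+1)) = 0 := Nat.choose_eq_zero_of_lt (by omega)
    simp only [Tq, z2, z3, z4, Nat.choose_self]
    push_cast
    field_simp
    ring
  · -- all zero
    have z1 : n.choose (2*k) = 0 := Nat.choose_eq_zero_of_lt h
    have z2 : (n-1).choose (2*k) = 0 := Nat.choose_eq_zero_of_lt (by omega)
    have z3 : (n-2).choose (2*k) = 0 := Nat.choose_eq_zero_of_lt (by omega)
    have z4 : n.choose (2*(k+1)) = 0 := Nat.choose_eq_zero_of_lt (by omega)
    simp [Tq, z1, z2, z3, z4]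

noncomputable def Fq (n : ℕ) : ℚ := ∑ k ∈ range (n+1), Tq n k


lemma Tq_zero (n k : ℕ) (h : n < 2*k) : Tq n k = 0 := by
  simp [Tq, Nat.choose_eq_zero_of_lt h]

lemma Fq_rec (n : ℕ) (hn : 2 ≤ n) :
    (n:ℚ)^2 * Fq n = 8*(3*(n:ℚ)^2-3*(n:ℚ)+1) * Fq (n-1) - 128*((n:ℚ)-1)^2 * Fq (n-2) := by
  obtain ⟨j, rfl⟩ : ∃ j, n = j + 2 := ⟨n - 2, by omega⟩
  have r1 : j + 2 - 1 = j + 1 := rfl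
  have r2 : j + 2 - 2 = j := rfl
  rw [r1, r2]
  have hx : ((j:ℚ) + 2) ≠ 0 := by positivity
  -- telescoping
  have tele : ∑ k ∈ range (j+4), 8*((k:ℚ)+1)^3 * Tq (j+2) (k+1)
      = ∑ k ∈ range (j+4), 8*(k:ℚ)^3 * Tq (j+2) k := by
    have e0 := Finset.sum_range_succ' (fun i => 8*(i:ℚ)^3 * Tq (j+2) i) (j+4)
    have e1 := Finset.sum_range_succ (fun i => 8*(i:ℚ)^3 * Tq (j+2) i) (j+4)
    have z : Tq (j+2) (j+4) = 0 := Tq_zero _ _ (by omega)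
    rw [z] at e1
    have : ∑ k ∈ range (j+4), 8*((k:ℚ)+1)^3 * Tq (j+2) (k+1)
        = ∑ i ∈ range (j+4), 8*((i+1 : ℕ):ℚ)^3 * Tq (j+2) (i+1) := by
      refine Finset.sum_congr rfl fun i _ => ?_
      push_cast; ring
    rw [this]
    have e0' : ∑ i ∈ range (j+5), 8*(i:ℚ)^3 * Tq (j+2) i
        = (∑ i ∈ range (j+4), 8*((i+1:ℕ):ℚ)^3 * Tq (j+2) (i+1)) + 8*((0:ℕ):ℚ)^3 * Tq (j+2) 0 := e0
    have e1' : ∑ i ∈ range (j+5), 8*(i:ℚ)^3 * Tq (j+2) i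
        = (∑ i ∈ range (j+4), 8*(i:ℚ)^3 * Tq (j+2) i) + 8*((j+4 : ℕ):ℚ)^3 * 0 := e1
    rw [e1'] at e0'
    push_cast at e0'
    linarith [e0']
  -- summed identity
  have S := Finset.sum_congr rfl
    (fun k (_ : k ∈ range (j+4)) => Tpt (j+2) k (by omega))
  rw [Finset.sum_add_distrib, Finset.sum_add_distrib, Finset.sum_add_distrib] at S
  rw [r1, r2] at S
  -- identify sums with Fq
  have s0 : ∑ k ∈ range (j+4), Tq (j+2) k = Fq (j+2) := by
    rw [Fq, Finset.sum_range_succ (n := j+3)]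
    rw [Tq_zero (j+2) (j+3) (by omega), add_zero]
  have s1 : ∑ k ∈ range (j+4), Tq (j+1) k = Fq (j+1) := by
    rw [Fq, Finset.sum_range_succ (n := j+3), Finset.sum_range_succ (n := j+2)]
    rw [Tq_zero (j+1) (j+3) (by omega), Tq_zero (j+1) (j+2) (by omega)]
    ring
  have s2 : ∑ k ∈ range (j+4), Tq j k = Fq j := by
    rw [Fq, Finset.sum_range_succ (n := j+3), Finset.sum_range_succ (n := j+2),
        Finset.sum_range_succ (n := j+1)]
    rw [Tq_zero j (j+3) (by omega), Tq_zero j (j+2) (by omega),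
        Tq_zero j (j+1) (by omega)]
    ring
  have c0 : ∑ k ∈ range (j+4), ((j+2:ℕ):ℚ)^3 * Tq (j+2) k = ((j+2:ℕ):ℚ)^3 * Fq (j+2) := by
    rw [← Finset.mul_sum, s0]
  have c2 : ∑ k ∈ range (j+4), 128*((j+2:ℕ):ℚ)*(((j+2:ℕ):ℚ)-1)^2 * Tq j k
      = 128*((j+2:ℕ):ℚ)*(((j+2:ℕ):ℚ)-1)^2 * Fq j := by
    rw [← Finset.mul_sum, s2]
  have c1 : ∑ k ∈ range (j+4), 8*((j+2:ℕ):ℚ)*(3*((j+2:ℕ):ℚ)^2-3*((j+2:ℕ):ℚ)+1) * Tq (j+1) k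
      = 8*((j+2:ℕ):ℚ)*(3*((j+2:ℕ):ℚ)^2-3*((j+2:ℕ):ℚ)+1) * Fq (j+1) := by
    rw [← Finset.mul_sum, s1]
  rw [c0, c2, c1, tele] at S
  have final : ((j+2:ℕ):ℚ)^3 * Fq (j+2) + 128*((j+2:ℕ):ℚ)*(((j+2:ℕ):ℚ)-1)^2 * Fq j
      = 8*((j+2:ℕ):ℚ)*(3*((j+2:ℕ):ℚ)^2-3*((j+2:ℕ):ℚ)+1) * Fq (j+1) := by
    linarith [S]
  push_cast at final ⊢
  apply mul_left_cancel₀ hx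
  ring_nf
  ring_nf at final
  linarith [final]

lemma Fq0 : Fq 0 = 1 := by simp [Fq, Tq]

lemma Fq1 : Fq 1 = 8 := by
  rw [Fq]
  rw [Finset.sum_range_succ, Finset.sum_range_succ, Finset.sum_range_zero]
  simp [Tq]

lemma P_eq_Fq (P : ℕ → ℤ) (h0 : P 0 = 1) (h1 : P 1 = 8)
    (hrec : ∀ n : ℕ, 2 ≤ n →
      (n : ℤ) ^ 2 * P n =
        8 * (3 * (n : ℤ) ^ 2 - 3 * (n : ℤ) + 1) * P (n - 1)
          - 128 * ((n : ℤ) - 1) ^ 2 * P (n - 2)) :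
    ∀ n, (P n : ℚ) = Fq n := by
  intro n
  induction n using Nat.strong_induction_on with
  | _ n ih =>
    match n with
    | 0 => rw [h0, Fq0]; norm_num
    | 1 => rw [h1, Fq1]; norm_num
    | (m+2) =>
      have h2 : 2 ≤ m + 2 := by omega
      have hz := hrec (m+2) h2
      have hq := congrArg (fun z : ℤ => (z : ℚ)) hz
      push_cast at hq
      have hF := Fq_rec (m+2) h2
      push_cast at hF
      have e1 : (P (m+1) : ℚ) = Fq (m+1) := ih (m+1) (by omega)
      have e2 : (P m : ℚ) = Fq m := ih m (by omega)
      rw [e1, e2] at hq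
      have hx : ((m:ℚ)+2)^2 ≠ 0 := by positivity
      have r1 : m + 2 - 1 = m + 1 := rfl
      have r2 : m + 2 - 2 = m := rfl

      apply mul_left_cancel₀ hx
      linarith [hq, hF]

def Aint (n : ℕ) : ℤ :=
  ∑ k ∈ range (n+1), ((n.choose (2*k)) : ℤ) * (((2*k).choose k) : ℤ)^2 * 16^(n-k)

lemma A_eq (n : ℕ) : ((Aint n : ℤ) : ℚ) = 2^n * Fq n := by
  rw [Aint, Fq]
  push_cast
  rw [Finset.mul_sum]
  refine Finset.sum_congr rfl fun k hk => ?_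
  have hk' : k ≤ n := by have := Finset.mem_range.mp hk; omega
  rw [Tq]
  have h16 : ((16:ℚ))^(n-k) * 16^k = 16^n := by
    rw [← pow_add]; congr 1; omega
  have h16' : ((2:ℚ))^n * 8^n = 16^n := by
    rw [← mul_pow]; norm_num
  field_simp
  calc (n.choose (2*k) : ℚ) * ((2*k).choose k : ℚ)^2 * 16^(n-k) * 16^k
      = (n.choose (2*k) : ℚ) * ((2*k).choose k : ℚ)^2 * (16^(n-k) * 16^k) := by ring
    _ = (n.choose (2*k) : ℚ) * ((2*k).choose k : ℚ)^2 * (2^n * 8^n) := by rw [h16, ← h16']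
      _ = (n.choose (2*k) : ℚ) * ((2*k).choose k : ℚ)^2 * 2^n * 8^n := by ring

lemma P_A (P : ℕ → ℤ) (h0 : P 0 = 1) (h1 : P 1 = 8)
    (hrec : ∀ n : ℕ, 2 ≤ n →
      (n : ℤ) ^ 2 * P n =
        8 * (3 * (n : ℤ) ^ 2 - 3 * (n : ℤ) + 1) * P (n - 1)
          - 128 * ((n : ℤ) - 1) ^ 2 * P (n - 2)) (n : ℕ) :
    2^n * P n = Aint n := by
  have := P_eq_Fq P h0 h1 hrec n
  have h2 : ((2^n * P n : ℤ) : ℚ) = ((Aint n : ℤ) : ℚ) := by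
    rw [A_eq n, ← this]; push_cast; ring
  exact_mod_cast h2

lemma Lvdm (m : ℕ) : ∑ k ∈ range (m+1), (m.choose k)^2 = (2*m).choose m := by
  have := Nat.add_choose_eq m m m
  rw [two_mul, this, Finset.Nat.sum_antidiagonal_eq_sum_range_succ_mk]
  refine Finset.sum_congr rfl fun k hk => ?_
  have hk' : k ≤ m := by simpa [Nat.lt_succ_iff] using hk
  rw [Nat.choose_symm hk', sq]


variable (p : ℕ) [hpi : Fact p.Prime]


lemma ch_a (j : ℕ) (hj : j ≤ p - 1) : (((p-1).choose j : ℕ) : ZMod p) = (-1)^j := by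
  induction j with
  | zero => simp
  | succ i ihi =>
    have hp2 : 2 ≤ p := (Fact.out : p.Prime).two_le
    have hi : i ≤ p - 1 := by omega
    have hcs := Nat.choose_succ_succ (p-1) i
    have e : p - 1 + 1 = p := by omega
    rw [show (p-1).succ = p - 1 + 1 from rfl, e] at hcs
    have hdvd : ((p.choose (i+1) : ℕ) : ZMod p) = 0 := by
      rw [ZMod.natCast_eq_zero_iff]
      exact (Fact.out : p.Prime).dvd_choose_self (by omega) (by omega)
    simp only [Nat.succ_eq_add_one] at hcs
    have hc := congrArg (fun z : ℕ => (z : ZMod p)) hcs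
    push_cast at hc
    rw [hdvd, ihi hi] at hc
    have : ((p-1).choose (i+1) : ZMod p) = -(-1)^i := by linear_combination -hc
    rw [this]; ring

lemma ch_b (m : ℕ) (hpm : p = 2*m+1) :
    ∀ k, k ≤ m → (((2*k).choose k : ℕ) : ZMod p) = (-4)^k * (m.choose k) := by
  intro k
  induction k with
  | zero => simp
  | succ i ih =>
    intro hi1
    have hi : i ≤ m := by omega
    have hIH := ih hi
    have hne : ((i+1 : ℕ) : ZMod p) ≠ 0 := by
      rw [Ne, ZMod.natCast_eq_zero_iff]
      intro hdvd
      have := Nat.le_of_dvd (by omega) hdvd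
      omega
    have hL2 := congrArg (fun z : ℕ => (z : ZMod p)) (L2 i)
    push_cast at hL2
    have hR := congrArg (fun z : ℕ => (z : ZMod p)) (Nat.choose_succ_right_eq m i)
    have hmi : ((m - i : ℕ) : ZMod p) = (m : ZMod p) - i := by
      rw [Nat.cast_sub hi]
    push_cast [hmi] at hR
    have hp0 : ((2*m+1 : ℕ) : ZMod p) = 0 := by rw [← hpm]; exact ZMod.natCast_self p
    push_cast at hp0
    apply mul_left_cancel₀ hne
    push_cast
    calc ((i:ZMod p)+1) * ((2*(i+1)).choose (i+1) : ZMod p)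
        = 2*(2*(i:ZMod p)+1) * (((2*i).choose i : ℕ) : ZMod p) := by
          push_cast at hL2 ⊢; linear_combination hL2
      _ = 2*(2*(i:ZMod p)+1) * ((-4)^i * (m.choose i)) := by rw [hIH]
      _ = ((i:ZMod p)+1) * ((-4)^(i+1) * (m.choose (i+1))) := by
          have : (m.choose (i+1) : ZMod p) * ((i:ZMod p)+1) = (m.choose i) * ((m:ZMod p) - i) := by
            push_cast at hR ⊢; linear_combination hR
          have hgoal : ((i:ZMod p)+1) * ((-4)^(i+1) * (m.choose (i+1)))
              = (-4)^(i+1) * ((m.choose (i+1) : ZMod p) * ((i:ZMod p)+1)) := by ring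
          rw [hgoal, this]
          linear_combination ((-4:ZMod p)^i * (m.choose i) * 2) * hp0

lemma Aval (m : ℕ) (hpm : p = 2*m+1) :
    ((Aint (p-1) : ℤ) : ZMod p) = 16^(p-1) * (-1)^m := by
  have hp1 : p - 1 = 2*m := by omega
  rw [Aint]
  push_cast
  have hsub : range (m+1) ⊆ range (p-1+1) := by
    apply Finset.range_subset_range.mpr; omega
  rw [← Finset.sum_subset hsub (fun x hx hxn => ?_)]
  · -- sum over range (m+1)
    have hterm : ∀ k ∈ range (m+1),
        ((p-1).choose (2*k) : ZMod p) * (((2*k).choose k : ℕ) : ZMod p)^2 * (16:ZMod p)^(p-1-k)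
          = 16^(p-1) * ((m.choose k : ZMod p))^2 := by
      intro k hk
      have hkm : k ≤ m := by simpa [Nat.lt_succ_iff] using hk
      rw [ch_a p (2*k) (by omega), ch_b p m hpm k hkm]
      have h16 : (16:ZMod p)^(p-1-k) * 16^k = 16^(p-1) := by
        rw [← pow_add]; congr 1; omega
      have e4 : ((-4:ZMod p)^k)^2 = 16^k := by
        rw [← pow_mul, mul_comm k 2, pow_mul]; norm_num
      calc (-1:ZMod p)^(2*k) * ((-4)^k * (m.choose k))^2 * (16:ZMod p)^(p-1-k)
          = ((-1)^2)^k * ((-4:ZMod p)^k)^2 * (m.choose k : ZMod p)^2 * 16^(p-1-k) := by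
            rw [pow_mul]; ring
        _ = (16:ZMod p)^k * (m.choose k : ZMod p)^2 * 16^(p-1-k) := by rw [e4]; norm_num
        _ = 16^(p-1) * ((m.choose k : ZMod p))^2 := by rw [← h16]; ring
    rw [Finset.sum_congr rfl hterm]
    rw [← Finset.mul_sum]
    congr 1
    have : ∑ k ∈ range (m+1), ((m.choose k : ZMod p))^2
        = (((2*m).choose m : ℕ) : ZMod p) := by
      rw [← Lvdm m]; push_cast; rfl
    rw [this, ← hp1, ch_a p m (by omega)]
  · -- vanishing terms
    have hx1 : m + 1 ≤ x := by simpa [Nat.lt_succ_iff] using hxn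
    have : (p-1).choose (2*x) = 0 := Nat.choose_eq_zero_of_lt (by omega)
    rw [this]
    push_cast
    ring

/-- If `p` is a prime with `p ≡ 5` or `7 (mod 8)`, then `p ∣ P ((p-1)/2)` for the
Catalan-Larcombe-French numbers. -/
theorem clf_central_dvd (p : ℕ) (hp : p.Prime) (h8 : p % 8 = 5 ∨ p % 8 = 7)
    (P : ℕ → ℤ) (h0 : P 0 = 1) (h1 : P 1 = 8)
    (hrec : ∀ n : ℕ, 2 ≤ n →
      (n : ℤ) ^ 2 * P n =
        8 * (3 * (n : ℤ) ^ 2 - 3 * (n : ℤ) + 1) * P (n - 1)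
          - 128 * ((n : ℤ) - 1) ^ 2 * P (n - 2)) :
    (p : ℤ) ∣ P ((p - 1) / 2) := by
  haveI hpi : Fact p.Prime := ⟨hp⟩
  have hp5 : 5 ≤ p := by rcases h8 with h | h <;> omega
  have hodd : p % 2 = 1 := by omega
  set m := (p - 1) / 2 with hm
  have hpm : p = 2*m+1 := by omega
  -- recurrence in ZMod p
  have hrecZ : ∀ n : ℕ, 2 ≤ n → ((n : ℕ) : ZMod p)^2 * ((P n : ℤ) : ZMod p)
      = 8*(3*((n:ℕ):ZMod p)^2 - 3*((n:ℕ):ZMod p) + 1) * ((P (n-1) : ℤ) : ZMod p)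
        - 128*(((n:ℕ):ZMod p) - 1)^2 * ((P (n-2) : ℤ) : ZMod p) := by
    intro n hn
    have := congrArg (fun z : ℤ => (z : ZMod p)) (hrec n hn)
    push_cast at this
    exact this
  -- Fermat facts
  have h2ne : (2 : ZMod p) ≠ 0 := by
    have : ((2:ℕ) : ZMod p) ≠ 0 := by
      rw [Ne, ZMod.natCast_eq_zero_iff]
      intro h; have := Nat.le_of_dvd two_pos h; omega
    simpa using this
  have hferm : (2 : ZMod p)^(p-1) = 1 := ZMod.pow_card_sub_one_eq_one h2ne
  have h16f : (16 : ZMod p)^(p-1) = 1 := by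
    have e : (16:ZMod p) = 2^4 := by norm_num
    rw [e, ← pow_mul, mul_comm, pow_mul, hferm]; norm_num
  -- value of P (p-1) mod p
  have hcval : ((P (p-1) : ℤ) : ZMod p) = (-1)^m := by
    have hPA := congrArg (fun z : ℤ => (z : ZMod p)) (P_A P h0 h1 hrec (p-1))
    push_cast at hPA
    rw [Aval p m hpm, hferm, h16f] at hPA
    linear_combination hPA
  -- reflection
  have hrefl : ∀ n : ℕ, n ≤ p - 1 →
      (128 : ZMod p)^n * ((P (p-1-n) : ℤ) : ZMod p)
        = ((P (p-1) : ℤ) : ZMod p) * ((P n : ℤ) : ZMod p) := by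
    intro n
    induction n using Nat.strong_induction_on with
    | _ n ih =>
      match n with
      | 0 => intro _; simp [h0]
      | 1 =>
        intro _
        have hb := hrecZ p (by omega)
        rw [ZMod.natCast_self] at hb
        have e1 : p - 1 - 1 = p - 2 := by omega
        rw [e1, h1]
        push_cast
        linear_combination hb
      | (j+2) =>
        intro hn
        have ih1 := ih (j+1) (by omega) (by omega)
        have ih0 := ih j (by omega) (by omega)
        have hB := hrecZ (j+2) (by omega)
        push_cast at hB
        have hA := hrecZ (p-1-j) (by omega)
        have hcast : ((p-1-j : ℕ) : ZMod p) = -((j:ZMod p)+1) := by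
          have e : p-1-j = p-(j+1) := by omega
          rw [e, Nat.cast_sub (by omega)]
          rw [ZMod.natCast_self]
          push_cast
          ring
        rw [hcast] at hA
        have e1 : p-1-j-1 = p-1-(j+1) := by omega
        have e2 : p-1-j-2 = p-1-(j+2) := by omega
        rw [e1, e2] at hA
        have hne : ((j+2 : ℕ) : ZMod p) ≠ 0 := by
          rw [Ne, ZMod.natCast_eq_zero_iff]
          intro h; have := Nat.le_of_dvd (by omega) h; omega
        have hne' : ((j:ZMod p)+2) ≠ 0 := by push_cast at hne; exact hne
        apply mul_left_cancel₀ (pow_ne_zero 2 hne')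
        push_cast
        linear_combination ((128:ZMod p)^(j+1)) * hA
          + (8*(3*((j:ZMod p)+2)^2 - 3*((j:ZMod p)+2) + 1)) * ih1
          - (128*((j:ZMod p)+1)^2) * ih0
          - ((P (p-1) : ℤ) : ZMod p) * hB
  -- center
  have hmid : (128 : ZMod p)^m * ((P m : ℤ) : ZMod p)
      = ((P (p-1) : ℤ) : ZMod p) * ((P m : ℤ) : ZMod p) := by
    have := hrefl m (by omega)
    rwa [show p-1-m = m by omega] at this
  rw [hcval] at hmid
  -- conclude
  rw [← ZMod.intCast_zmod_eq_zero_iff_dvd]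
  by_contra hQ
  have hfac : ((128 : ZMod p)^m - (-1)^m) * ((P m : ℤ) : ZMod p) = 0 := by
    linear_combination hmid
  have h128 : (128 : ZMod p)^m = (-1)^m := by
    rcases mul_eq_zero.mp hfac with h | h
    · linear_combination h
    · exact absurd h hQ
  -- Euler / quadratic reciprocity part
  have hp2 : p ≠ 2 := by omega
  have hpd2 : p / 2 = m := by omega
  have heuler := legendreSym.eq_pow p 2
  rw [legendreSym.at_two hp2, ZMod.χ₈_nat_eq_if_mod_eight, hpd2] at heuler
  have h128e : (128 : ZMod p)^m = ((2:ZMod p)^m)^7 := by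
    rw [← pow_mul, mul_comm, pow_mul]; norm_num
  rcases h8 with h5 | h7
  · have hif : (if p % 2 = 0 then (0:ℤ) else if p % 8 = 1 ∨ p % 8 = 7 then 1 else -1) = -1 := by
      rw [if_neg (by omega), if_neg (by omega)]
    rw [hif] at heuler
    push_cast at heuler
    have hm2 : (-1 : ZMod p)^m = 1 := by
      obtain ⟨t, ht⟩ : ∃ t, m = 2*t := ⟨m/2, by omega⟩
      rw [ht, pow_mul]; norm_num
    rw [h128e, ← heuler, hm2] at h128
    have : (2 : ZMod p) = 0 := by linear_combination -h128
    exact h2ne this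
  · have hif : (if p % 2 = 0 then (0:ℤ) else if p % 8 = 1 ∨ p % 8 = 7 then 1 else -1) = 1 := by
      rw [if_neg (by omega), if_pos (by omega)]
    rw [hif] at heuler
    push_cast at heuler
    have hm2 : (-1 : ZMod p)^m = -1 := by
      obtain ⟨t, ht⟩ : ∃ t, m = 2*t+1 := ⟨m/2, by omega⟩
      rw [ht, pow_succ, pow_mul]; norm_num
    rw [h128e, ← heuler, hm2] at h128
    have : (2 : ZMod p) = 0 := by linear_combination h128
    exact h2ne this
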